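/- In ZF: a countable first-order theory T₁ of dense linear orders without endpoints with an increasing ω-sequence of constants is not categorical in any infinite power: whenever it has a model with universe X, it has at least two non-isomorphic models with universe X. -/

import Mathlib

open FirstOrder Language

/-- The vocabulary of the Ehrenfeucht example: the order symbol together with
constants `c_n` for `n < ω`. -/
abbrev EL : FirstOrder.Language := Language.order[[ℕ]]

instance : IsOrdered EL := ⟨Sum.inl leSymb⟩

/-- The constant `c_n`, as a closed term. -/
def cT (n : ℕ) : EL.Term (Empty ⊕ Fin 0) := Constants.term (Language.order.con n)

/-- The Ehrenfeucht theory `T₁`: dense linear order without endpoints together with the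
axioms `c_n < c_{n+1}` for all `n < ω`. -/
def T1 : EL.Theory :=
  (LHom.sumInl.onTheory Language.order.dlo) ∪
    Set.range (fun n : ℕ => (Term.lt (cT n) (cT (n + 1)) : EL.Sentence))

section
variable {X : Type*}

/-- The interpretation of `≤` in a structure `S` on `X`. -/
def Ele (S : EL.Structure X) (a b : X) : Prop :=
  @Structure.RelMap EL X S 2 (Sum.inl leSymb) ![a, b]

/-- The interpretation of `<` in a structure `S` on `X`. -/
def Elt (S : EL.Structure X) (a b : X) : Prop := Ele S a b ∧ a ≠ b

/-- The interpretation of the constant `c_n` in a structure `S` on `X`. -/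
def Econ (S : EL.Structure X) (n : ℕ) : X :=
  @Structure.funMap EL X S 0 (Language.order.con n) ![]

/-- `a` realizes the type `p(x) = {c_n < x : n < ω}` in the structure `S`. -/
def RealizesP (S : EL.Structure X) (a : X) : Prop := ∀ n : ℕ, Elt S (Econ S n) a

end

/-! ### Auxiliary constructions -/

namespace EhrenfeuchtAux

variable {X : Type*}

/-- Build an `EL`-structure from an explicit linear order and constants. -/
noncomputable def mkS (r : LinearOrder X) (c : ℕ → X) : EL.Structure X :=
  letI : LE X := ⟨r.le⟩
  letI s1 : Language.order.Structure X := orderStructure X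
  letI s2 : (constantsOn ℕ).Structure X := constantsOn.structure c
  Language.sumStructure _ _ X

lemma Econ_mkS (r : LinearOrder X) (c : ℕ → X) (n : ℕ) : Econ (mkS r c) n = c n := rfl

lemma Elt_mkS (r : LinearOrder X) (c : ℕ → X) (a b : X) :
    Elt (mkS r c) a b ↔ r.lt a b := by
  letI := r
  show a ≤ b ∧ a ≠ b ↔ a < b
  exact ⟨fun h => lt_of_le_of_ne h.1 h.2, fun h => ⟨le_of_lt h, ne_of_lt h⟩⟩

theorem mkS_model (r : LinearOrder X) (c : ℕ → X)
    (hdense : ∀ a b : X, r.lt a b → ∃ z, r.lt a z ∧ r.lt z b)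
    (hnomax : ∀ a : X, ∃ b, r.lt a b)
    (hnomin : ∀ a : X, ∃ b, r.lt b a)
    (hc : ∀ n, r.lt (c n) (c (n + 1))) :
    @Theory.Model EL X (mkS r c) T1 := by
  letI := r
  letI SS : EL.Structure X := mkS r c
  letI SS' : (Language.order.sum (constantsOn ℕ)).Structure X := mkS r c
  haveI : DenselyOrdered X := ⟨hdense⟩
  haveI : NoMaxOrder X := ⟨hnomax⟩
  haveI : NoMinOrder X := ⟨hnomin⟩
  letI s1 : Language.order.Structure X := orderStructure X
  haveI exp : (LHom.sumInl : Language.order →ᴸ EL).IsExpansionOn X :=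
    ⟨fun {n} f x => rfl, fun {n} R x => rfl⟩
  haveI os : Language.order.OrderedStructure X := ⟨fun x => Iff.rfl⟩
  haveI osE : EL.OrderedStructure X := ⟨fun x => Iff.rfl⟩
  haveI : X ⊨ Language.order.dlo := model_dlo
  show X ⊨ T1
  refine Theory.model_union_iff.2 ⟨(LHom.onTheory_model LHom.sumInl Language.order.dlo).2
    inferInstance, (Theory.model_iff _).2 ?_⟩
  rintro φ ⟨n, rfl⟩
  have : (Term.lt (cT n) (cT (n + 1))).Realize (default : Empty → X) (default : Fin 0 → X) := by
    rw [Term.realize_lt]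
    exact hc n
  exact this

/-- Transfer of the realization of `p` along an isomorphism. -/
lemma realizesP_transfer {S₁ S₂ : EL.Structure X} (f : @Language.Equiv EL X X S₁ S₂) {a : X}
    (h : RealizesP S₁ a) : RealizesP S₂ (f a) := by
  intro n
  have hcon : f (Econ S₁ n) = Econ S₂ n := by
    have h0 : (f : X → X) ∘ (![] : Fin 0 → X) = ![] := funext fun i => i.elim0
    have := @Language.Equiv.map_fun EL X X S₁ S₂ f 0 (Language.order.con n) ![]
    rw [h0] at this
    exact this
  obtain ⟨hle, hne⟩ := h n
  constructor
  · show @Structure.RelMap EL X S₂ 2 (Sum.inl leSymb) ![Econ S₂ n, f a]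
    rw [← hcon]
    have h2 : (f : X → X) ∘ (![Econ S₁ n, a]) = ![f (Econ S₁ n), f a] := by
      funext i; fin_cases i <;> rfl
    rw [← h2, @Language.Equiv.map_rel EL X X S₁ S₂ f 2 (Sum.inl leSymb) ![Econ S₁ n, a] ]
    exact hle
  · intro e
    have heq : (@Language.Equiv.toEquiv EL X X S₁ S₂ f) (Econ S₁ n) =
        (@Language.Equiv.toEquiv EL X X S₁ S₂ f) a := by
      show f (Econ S₁ n) = f a
      rw [hcon]; exact e
    exact hne ((@Language.Equiv.toEquiv EL X X S₁ S₂ f).injective heq)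

section Orders

variable [LinearOrder X] [DenselyOrdered X] [NoMaxOrder X] [NoMinOrder X]

/-- The set of strict upper bounds of the constants. -/
def Uset (c : ℕ → X) : Set X := {x | ∀ n, c n < x}

omit [DenselyOrdered X] [NoMaxOrder X] [NoMinOrder X] in
lemma not_mem_Uset {c : ℕ → X} {x : X} : x ∉ Uset c ↔ ∃ n, x ≤ c n := by
  simp [Uset, not_lt]

omit [DenselyOrdered X] [NoMaxOrder X] [NoMinOrder X] in
lemma mem_Uset_mono {c : ℕ → X} {x y : X} (hx : x ∈ Uset c) (hxy : x ≤ y) : y ∈ Uset c :=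
  fun n => lt_of_lt_of_le (hx n) hxy

omit [DenselyOrdered X] [NoMaxOrder X] [NoMinOrder X] in
lemma not_mem_Uset_mono {c : ℕ → X} {x y : X} (hy : y ∉ Uset c) (hxy : x ≤ y) : x ∉ Uset c := by
  obtain ⟨n, hn⟩ := not_mem_Uset.1 hy
  exact not_mem_Uset.2 ⟨n, hxy.trans hn⟩

omit [DenselyOrdered X] [NoMaxOrder X] [NoMinOrder X] in
lemma c_not_mem_Uset {c : ℕ → X} (k : ℕ) : c k ∉ Uset c := not_mem_Uset.2 ⟨k, le_rfl⟩

/-! #### The omitting order: move `Uset c` (reversed) to the bottom. -/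

/-- The "omitting" strict order. -/
def lt2 (c : ℕ → X) (x y : X) : Prop :=
  (x ∈ Uset c ∧ y ∈ Uset c ∧ y < x) ∨ (x ∈ Uset c ∧ y ∉ Uset c) ∨
    (x ∉ Uset c ∧ y ∉ Uset c ∧ x < y)

omit [DenselyOrdered X] [NoMaxOrder X] [NoMinOrder X] in
lemma lt2_sto (c : ℕ → X) : IsStrictTotalOrder X (lt2 c) where
  trichotomous x y := by
    refine fun h1 h2 => ((?_ : lt2 c x y ∨ x = y ∨ lt2 c y x).resolve_left h1).resolve_right h2
    by_cases hx : x ∈ Uset c <;> by_cases hy : y ∈ Uset c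
    · rcases lt_trichotomy x y with h | h | h
      · exact Or.inr (Or.inr (Or.inl ⟨hy, hx, h⟩))
      · exact Or.inr (Or.inl h)
      · exact Or.inl (Or.inl ⟨hx, hy, h⟩)
    · exact Or.inl (Or.inr (Or.inl ⟨hx, hy⟩))
    · exact Or.inr (Or.inr (Or.inr (Or.inl ⟨hy, hx⟩)))
    · rcases lt_trichotomy x y with h | h | h
      · exact Or.inl (Or.inr (Or.inr ⟨hx, hy, h⟩))
      · exact Or.inr (Or.inl h)
      · exact Or.inr (Or.inr (Or.inr (Or.inr ⟨hy, hx, h⟩)))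
  irrefl x h := by
    rcases h with ⟨_, _, h⟩ | ⟨h1, h2⟩ | ⟨_, _, h⟩
    · exact lt_irrefl _ h
    · exact h2 h1
    · exact lt_irrefl _ h
  trans a b d h1 h2 := by
    rcases h1 with ⟨ha, hb, hba⟩ | ⟨ha, hb⟩ | ⟨ha, hb, hab⟩ <;>
      rcases h2 with ⟨hb', hd, hdb⟩ | ⟨hb', hd⟩ | ⟨hb', hd, hbd⟩
    · exact Or.inl ⟨ha, hd, hdb.trans hba⟩
    · exact Or.inr (Or.inl ⟨ha, hd⟩)
    · exact absurd hb hb'.elim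
    · exact absurd hb' hb.elim
    · exact absurd hb' hb.elim
    · exact Or.inr (Or.inl ⟨ha, hd⟩)
    · exact absurd hb' (fun h => hb h)
    · exact absurd hb' (fun h => hb h)
    · exact Or.inr (Or.inr ⟨ha, hd, hab.trans hbd⟩)

/-- The "omitting" linear order. -/
noncomputable def r2 (c : ℕ → X) : LinearOrder X :=
  haveI : IsStrictTotalOrder X (lt2 c) := lt2_sto c
  letI : DecidableRel (lt2 c) := Classical.decRel _
  linearOrderOfSTO (lt2 c)

omit [DenselyOrdered X] [NoMaxOrder X] [NoMinOrder X] in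
lemma r2_lt {c : ℕ → X} {x y : X} : (r2 c).lt x y ↔ lt2 c x y := Iff.rfl

theorem r2_dense (c : ℕ → X) (a b : X) (hab : (r2 c).lt a b) :
    ∃ z, (r2 c).lt a z ∧ (r2 c).lt z b := by
  rcases r2_lt.1 hab with ⟨ha, hb, hba⟩ | ⟨ha, hb⟩ | ⟨ha, hb, h⟩
  · obtain ⟨z, hz1, hz2⟩ := exists_between hba
    have hzU : z ∈ Uset c := mem_Uset_mono hb hz1.le
    exact ⟨z, r2_lt.2 (Or.inl ⟨ha, hzU, hz2⟩), r2_lt.2 (Or.inl ⟨hzU, hb, hz1⟩)⟩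
  · obtain ⟨z, hz⟩ := exists_lt b
    have hzU : z ∉ Uset c := not_mem_Uset_mono hb hz.le
    exact ⟨z, r2_lt.2 (Or.inr (Or.inl ⟨ha, hzU⟩)), r2_lt.2 (Or.inr (Or.inr ⟨hzU, hb, hz⟩))⟩
  · obtain ⟨z, hz1, hz2⟩ := exists_between h
    have hzU : z ∉ Uset c := not_mem_Uset_mono hb hz2.le
    exact ⟨z, r2_lt.2 (Or.inr (Or.inr ⟨ha, hzU, hz1⟩)),
      r2_lt.2 (Or.inr (Or.inr ⟨hzU, hb, hz2⟩))⟩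

omit [DenselyOrdered X] [NoMinOrder X] in
theorem r2_nomax (c : ℕ → X) (hc : ∀ n, c n < c (n + 1)) (a : X) : ∃ b, (r2 c).lt a b := by
  by_cases ha : a ∈ Uset c
  · exact ⟨c 0, r2_lt.2 (Or.inr (Or.inl ⟨ha, c_not_mem_Uset 0⟩))⟩
  · obtain ⟨n, hn⟩ := not_mem_Uset.1 ha
    exact ⟨c (n + 1), r2_lt.2 (Or.inr (Or.inr ⟨ha, c_not_mem_Uset (n + 1),
      lt_of_le_of_lt hn (hc n)⟩))⟩

omit [DenselyOrdered X] in
theorem r2_nomin (c : ℕ → X) (a : X) : ∃ b, (r2 c).lt b a := by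
  by_cases ha : a ∈ Uset c
  · obtain ⟨b, hb⟩ := exists_gt a
    exact ⟨b, r2_lt.2 (Or.inl ⟨mem_Uset_mono ha hb.le, ha, hb⟩)⟩
  · obtain ⟨b, hb⟩ := exists_lt a
    exact ⟨b, r2_lt.2 (Or.inr (Or.inr ⟨not_mem_Uset_mono ha hb.le, ha, hb⟩))⟩

omit [DenselyOrdered X] [NoMaxOrder X] [NoMinOrder X] in
theorem r2_const (c : ℕ → X) (hc : ∀ n, c n < c (n + 1)) (n : ℕ) :
    (r2 c).lt (c n) (c (n + 1)) :=
  r2_lt.2 (Or.inr (Or.inr ⟨c_not_mem_Uset n, c_not_mem_Uset (n + 1), hc n⟩))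

omit [DenselyOrdered X] [NoMaxOrder X] [NoMinOrder X] in
theorem r2_omits (c : ℕ → X) (a : X) : ¬ ∀ n, (r2 c).lt (c n) a := by
  intro h
  by_cases ha : a ∈ Uset c
  · rcases r2_lt.1 (h 0) with ⟨hc0, _, _⟩ | ⟨hc0, _⟩ | ⟨_, ha', _⟩
    · exact c_not_mem_Uset 0 hc0
    · exact c_not_mem_Uset 0 hc0
    · exact ha' ha
  · obtain ⟨n, hn⟩ := not_mem_Uset.1 ha
    rcases r2_lt.1 (h n) with ⟨hcn, _, _⟩ | ⟨hcn, _⟩ | ⟨_, _, hlt⟩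
    · exact c_not_mem_Uset n hcn
    · exact c_not_mem_Uset n hcn
    · exact absurd hlt (not_lt.2 hn)

/-! #### The realizing order: `Uset c` reversed at the bottom, then blocks indexed by `ℚ`. -/

/-- A fixed bijection between `ℕ` and `ℚ`. -/
noncomputable def qe : ℕ ≃ ℚ := (Denumerable.eqv ℚ).symm

/-- The rational "position" of a point below the constants. -/
noncomputable def posQ (c : ℕ → X) (x : X) : ℚ :=
  letI := Classical.propDecidable (∃ n, x ≤ c n)
  if h : ∃ n, x ≤ c n then qe (Nat.find h) else 0

omit [DenselyOrdered X] [NoMaxOrder X] [NoMinOrder X] in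
lemma posQ_c {c : ℕ → X} (hsm : StrictMono c) (k : ℕ) : posQ c (c k) = qe k := by
  have h : ∃ n, c k ≤ c n := ⟨k, le_rfl⟩
  simp only [posQ]
  rw [dif_pos h]
  congr 1
  rw [Nat.find_eq_iff]
  exact ⟨le_rfl, fun m hm => not_le.2 (hsm hm)⟩

omit [DenselyOrdered X] [NoMaxOrder X] [NoMinOrder X] in
lemma posQ_sandwich {c : ℕ → X} {x y z : X} (hx : x ∉ Uset c) (hy : y ∉ Uset c)
    (hpq : posQ c x = posQ c y) (h1 : x < z) (h2 : z < y) :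
    z ∉ Uset c ∧ posQ c z = posQ c x := by
  have hx' : ∃ n, x ≤ c n := not_mem_Uset.1 hx
  have hy' : ∃ n, y ≤ c n := not_mem_Uset.1 hy
  have hz' : ∃ n, z ≤ c n := ⟨Nat.find hy', h2.le.trans (Nat.find_spec hy')⟩
  refine ⟨not_mem_Uset.2 hz', ?_⟩
  simp only [posQ, dif_pos hx', dif_pos hy', dif_pos hz'] at hpq ⊢
  have e1 : Nat.find hx' = Nat.find hy' := qe.injective hpq
  have l1 : Nat.find hz' ≤ Nat.find hy' := Nat.find_min' hz' (h2.le.trans (Nat.find_spec hy'))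
  have l2 : Nat.find hx' ≤ Nat.find hz' := Nat.find_min' hx' (h1.le.trans (Nat.find_spec hz'))
  have : Nat.find hz' = Nat.find hx' := le_antisymm (by rw [e1]; exact l1) l2
  exact congrArg qe this

/-- The "realizing" strict order. -/
noncomputable def lt1 (c : ℕ → X) (x y : X) : Prop :=
  (x ∈ Uset c ∧ y ∈ Uset c ∧ y < x) ∨ (x ∈ Uset c ∧ y ∉ Uset c) ∨
    (x ∉ Uset c ∧ y ∉ Uset c ∧ (posQ c x < posQ c y ∨ (posQ c x = posQ c y ∧ x < y)))

omit [DenselyOrdered X] [NoMaxOrder X] [NoMinOrder X] in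
lemma qlex_trans {p q r : ℚ} {x y z : X}
    (h : p < q ∨ (p = q ∧ x < y)) (h' : q < r ∨ (q = r ∧ y < z)) :
    p < r ∨ (p = r ∧ x < z) := by
  rcases h with h | ⟨e, h⟩ <;> rcases h' with h' | ⟨e', h'⟩
  · exact Or.inl (h.trans h')
  · exact Or.inl (e' ▸ h)
  · exact Or.inl (by rw [e]; exact h')
  · exact Or.inr ⟨e.trans e', h.trans h'⟩

omit [DenselyOrdered X] [NoMaxOrder X] [NoMinOrder X] in
lemma lt1_sto (c : ℕ → X) : IsStrictTotalOrder X (lt1 c) where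
  trichotomous x y := by
    refine fun h1 h2 => ((?_ : lt1 c x y ∨ x = y ∨ lt1 c y x).resolve_left h1).resolve_right h2
    by_cases hx : x ∈ Uset c <;> by_cases hy : y ∈ Uset c
    · rcases lt_trichotomy x y with h | h | h
      · exact Or.inr (Or.inr (Or.inl ⟨hy, hx, h⟩))
      · exact Or.inr (Or.inl h)
      · exact Or.inl (Or.inl ⟨hx, hy, h⟩)
    · exact Or.inl (Or.inr (Or.inl ⟨hx, hy⟩))
    · exact Or.inr (Or.inr (Or.inr (Or.inl ⟨hy, hx⟩)))
    · rcases lt_trichotomy (posQ c x) (posQ c y) with h | h | h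
      · exact Or.inl (Or.inr (Or.inr ⟨hx, hy, Or.inl h⟩))
      · rcases lt_trichotomy x y with h' | h' | h'
        · exact Or.inl (Or.inr (Or.inr ⟨hx, hy, Or.inr ⟨h, h'⟩⟩))
        · exact Or.inr (Or.inl h')
        · exact Or.inr (Or.inr (Or.inr (Or.inr ⟨hy, hx, Or.inr ⟨h.symm, h'⟩⟩)))
      · exact Or.inr (Or.inr (Or.inr (Or.inr ⟨hy, hx, Or.inl h⟩)))
  irrefl x h := by
    rcases h with ⟨_, _, h⟩ | ⟨h1, h2⟩ | ⟨_, _, h | ⟨_, h⟩⟩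
    · exact lt_irrefl _ h
    · exact h2 h1
    · exact lt_irrefl _ h
    · exact lt_irrefl _ h
  trans a b d h1 h2 := by
    rcases h1 with ⟨ha, hb, hba⟩ | ⟨ha, hb⟩ | ⟨ha, hb, hab⟩ <;>
      rcases h2 with ⟨hb', hd, hdb⟩ | ⟨hb', hd⟩ | ⟨hb', hd, hbd⟩
    · exact Or.inl ⟨ha, hd, hdb.trans hba⟩
    · exact Or.inr (Or.inl ⟨ha, hd⟩)
    · exact absurd hb hb'.elim
    · exact absurd hb' hb.elim
    · exact absurd hb' hb.elim
    · exact Or.inr (Or.inl ⟨ha, hd⟩)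
    · exact absurd hb' (fun h => hb h)
    · exact absurd hb' (fun h => hb h)
    · exact Or.inr (Or.inr ⟨ha, hd, qlex_trans hab hbd⟩)

/-- The "realizing" linear order. -/
noncomputable def r1 (c : ℕ → X) : LinearOrder X :=
  haveI : IsStrictTotalOrder X (lt1 c) := lt1_sto c
  letI : DecidableRel (lt1 c) := Classical.decRel _
  linearOrderOfSTO (lt1 c)

omit [DenselyOrdered X] [NoMaxOrder X] [NoMinOrder X] in
lemma r1_lt {c : ℕ → X} {x y : X} : (r1 c).lt x y ↔ lt1 c x y := Iff.rfl

omit [DenselyOrdered X] [NoMaxOrder X] [NoMinOrder X] in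
lemma lt1_of_pos {c : ℕ → X} {x y : X} (hx : x ∉ Uset c) (hy : y ∉ Uset c)
    (h : posQ c x < posQ c y) : (r1 c).lt x y :=
  r1_lt.2 (Or.inr (Or.inr ⟨hx, hy, Or.inl h⟩))

theorem r1_dense (c : ℕ → X) (hsm : StrictMono c) (a b : X) (hab : (r1 c).lt a b) :
    ∃ z, (r1 c).lt a z ∧ (r1 c).lt z b := by
  rcases r1_lt.1 hab with ⟨ha, hb, hba⟩ | ⟨ha, hb⟩ | ⟨ha, hb, h | ⟨he, hxy⟩⟩
  · obtain ⟨z, hz1, hz2⟩ := exists_between hba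
    have hzU : z ∈ Uset c := mem_Uset_mono hb hz1.le
    exact ⟨z, r1_lt.2 (Or.inl ⟨ha, hzU, hz2⟩), r1_lt.2 (Or.inl ⟨hzU, hb, hz1⟩)⟩
  · refine ⟨c (qe.symm (posQ c b - 1)), r1_lt.2 (Or.inr (Or.inl ⟨ha, c_not_mem_Uset _⟩)), ?_⟩
    refine lt1_of_pos (c_not_mem_Uset _) hb ?_
    rw [posQ_c hsm, Equiv.apply_symm_apply]
    linarith
  · obtain ⟨t, ht1, ht2⟩ := exists_between h
    refine ⟨c (qe.symm t), lt1_of_pos ha (c_not_mem_Uset _) ?_,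
      lt1_of_pos (c_not_mem_Uset _) hb ?_⟩ <;>
      rw [posQ_c hsm, Equiv.apply_symm_apply] <;> assumption
  · obtain ⟨z, hz1, hz2⟩ := exists_between hxy
    obtain ⟨hzU, hzp⟩ := posQ_sandwich ha hb he hz1 hz2
    refine ⟨z, r1_lt.2 (Or.inr (Or.inr ⟨ha, hzU, Or.inr ⟨hzp.symm, hz1⟩⟩)),
      r1_lt.2 (Or.inr (Or.inr ⟨hzU, hb, Or.inr ⟨by rw [hzp, he], hz2⟩⟩))⟩

omit [DenselyOrdered X] [NoMaxOrder X] [NoMinOrder X] in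
theorem r1_nomax (c : ℕ → X) (hsm : StrictMono c) (a : X) : ∃ b, (r1 c).lt a b := by
  by_cases ha : a ∈ Uset c
  · exact ⟨c 0, r1_lt.2 (Or.inr (Or.inl ⟨ha, c_not_mem_Uset 0⟩))⟩
  · refine ⟨c (qe.symm (posQ c a + 1)), lt1_of_pos ha (c_not_mem_Uset _) ?_⟩
    rw [posQ_c hsm, Equiv.apply_symm_apply]
    linarith

omit [DenselyOrdered X] [NoMinOrder X] in
theorem r1_nomin (c : ℕ → X) (hsm : StrictMono c) (a : X) : ∃ b, (r1 c).lt b a := by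
  by_cases ha : a ∈ Uset c
  · obtain ⟨b, hb⟩ := exists_gt a
    exact ⟨b, r1_lt.2 (Or.inl ⟨mem_Uset_mono ha hb.le, ha, hb⟩)⟩
  · refine ⟨c (qe.symm (posQ c a - 1)), lt1_of_pos (c_not_mem_Uset _) ha ?_⟩
    rw [posQ_c hsm, Equiv.apply_symm_apply]
    linarith

/-- The decreasing-position sequence of rationals. -/
def rq (n : ℕ) : ℚ := -(1 / (n + 1))

lemma rq_lt_one (n : ℕ) : rq n < 1 := by
  have : (0 : ℚ) < 1 / (n + 1) := by positivity
  simp only [rq]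
  linarith

lemma rq_strict (n : ℕ) : rq n < rq (n + 1) := by
  have h1 : (0 : ℚ) < (n : ℚ) + 1 := by positivity
  have h2 : (n : ℚ) + 1 < (n : ℚ) + 1 + 1 := by linarith
  have := one_div_lt_one_div_of_lt h1 h2
  simp only [rq]
  push_cast
  linarith [this]

omit [DenselyOrdered X] [NoMaxOrder X] [NoMinOrder X] in
theorem r1_const (c : ℕ → X) (hsm : StrictMono c) (n : ℕ) :
    (r1 c).lt (c (qe.symm (rq n))) (c (qe.symm (rq (n + 1)))) := by
  refine lt1_of_pos (c_not_mem_Uset _) (c_not_mem_Uset _) ?_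
  rw [posQ_c hsm, posQ_c hsm, Equiv.apply_symm_apply, Equiv.apply_symm_apply]
  exact rq_strict n

omit [DenselyOrdered X] [NoMaxOrder X] [NoMinOrder X] in
theorem r1_realizes (c : ℕ → X) (hsm : StrictMono c) (n : ℕ) :
    (r1 c).lt (c (qe.symm (rq n))) (c (qe.symm 1)) := by
  refine lt1_of_pos (c_not_mem_Uset _) (c_not_mem_Uset _) ?_
  rw [posQ_c hsm, posQ_c hsm, Equiv.apply_symm_apply, Equiv.apply_symm_apply]
  exact rq_lt_one n

/-- The two models, one realizing `p` and one omitting `p`. -/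
theorem exists_two_models (c : ℕ → X) (hc : ∀ n, c n < c (n + 1)) :
    ∃ S₁ S₂ : EL.Structure X, @Theory.Model EL X S₁ T1 ∧ @Theory.Model EL X S₂ T1 ∧
      (∃ a, RealizesP S₁ a) ∧ (∀ a, ¬ RealizesP S₂ a) := by
  have hsm : StrictMono c := strictMono_nat_of_lt_succ hc
  refine ⟨mkS (r1 c) (fun n => c (qe.symm (rq n))), mkS (r2 c) c, ?_, ?_, ?_, ?_⟩
  · exact mkS_model _ _ (r1_dense c hsm) (r1_nomax c hsm) (r1_nomin c hsm)
      (fun n => r1_const c hsm n)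
  · exact mkS_model _ _ (r2_dense c) (r2_nomax c hc) (r2_nomin c) (r2_const c hc)
  · refine ⟨c (qe.symm 1), fun n => ?_⟩
    rw [Econ_mkS, Elt_mkS]
    exact r1_realizes c hsm n
  · intro a ha
    refine r2_omits c a (fun n => ?_)
    have := ha n
    rw [Econ_mkS, Elt_mkS] at this
    exact this

end Orders

end EhrenfeuchtAux

open EhrenfeuchtAux in
/-- (ZF) The Ehrenfeucht theory `T₁` is not categorical in any infinite power: whenever it
has a model with universe `X`, it has two non-isomorphic models with universe `X`. -/
theorem T1_not_categorical (X : Type*)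
    (h : ∃ S : EL.Structure X, @Theory.Model EL X S T1) :
    ∃ S₁ S₂ : EL.Structure X,
      @Theory.Model EL X S₁ T1 ∧ @Theory.Model EL X S₂ T1 ∧
      ¬ Nonempty (@Language.Equiv EL X X S₁ S₂) := by
  obtain ⟨S, hS⟩ := h
  letI SS : EL.Structure X := S
  letI SS' : (Language.order.sum (constantsOn ℕ)).Structure X := S
  have hS' : @Theory.Model EL X S ((LHom.sumInl.onTheory Language.order.dlo) ∪
      Set.range (fun n : ℕ => (Term.lt (cT n) (cT (n + 1)) : EL.Sentence))) := hS
  obtain ⟨hA, hB⟩ := Theory.model_union_iff.1 hS'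
  letI s1 : Language.order.Structure X := (LHom.sumInl : Language.order →ᴸ EL).reduct X
  haveI exp : (LHom.sumInl : Language.order →ᴸ EL).IsExpansionOn X :=
    ⟨fun {n} f x => rfl, fun {n} R x => rfl⟩
  haveI hdlo : X ⊨ Language.order.dlo := (LHom.onTheory_model LHom.sumInl Language.order.dlo).1 hA
  haveI hlin : X ⊨ Language.order.linearOrderTheory := inferInstance
  haveI hdec : DecidableRel (fun (a b : X) =>
      Structure.RelMap (leSymb : Language.order.Relations 2) ![a, b]) :=
    fun _ _ => Classical.propDecidable _
  letI r : LinearOrder X := Language.order.linearOrderOfModels X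
  haveI os : Language.order.OrderedStructure X := ⟨fun x => by
    have hx : x = ![x 0, x 1] := by funext i; fin_cases i <;> rfl
    conv_lhs => rw [hx]
    exact Iff.rfl⟩
  haveI : DenselyOrdered X := denselyOrdered_of_dlo Language.order X
  haveI : NoTopOrder X := noTopOrder_of_dlo Language.order X
  haveI : NoBotOrder X := noBotOrder_of_dlo Language.order X
  haveI : NoMaxOrder X := NoTopOrder.to_noMaxOrder X
  haveI : NoMinOrder X := NoBotOrder.to_noMinOrder X
  haveI osE : EL.OrderedStructure X := ⟨fun x => by
    have hx : x = ![x 0, x 1] := by funext i; fin_cases i <;> rfl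
    conv_lhs => rw [hx]
    exact Iff.rfl⟩
  have hcon : ∀ n : ℕ, Econ S n < Econ S (n + 1) := by
    intro n
    haveI := hB
    have hr : (Term.lt (cT n) (cT (n + 1))).Realize (default : Empty → X)
        (default : Fin 0 → X) :=
      hB.realize_of_mem (Term.lt (cT n) (cT (n + 1))) ⟨n, rfl⟩
    rw [Term.realize_lt] at hr
    have e : ∀ m : ℕ,
        (cT m).realize (Sum.elim (default : Empty → X) (default : Fin 0 → X)) = Econ S m :=
      fun m => congrArg (Structure.funMap _) (funext fun i => i.elim0)
    rw [e n, e (n + 1)] at hr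
    exact hr
  obtain ⟨S₁, S₂, m₁, m₂, ⟨a, hra⟩, homit⟩ := exists_two_models (fun n => Econ S n) hcon
  refine ⟨S₁, S₂, m₁, m₂, ?_⟩
  rintro ⟨f⟩
  exact homit (f a) (realizesP_transfer f hra)
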